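/- Let ℐ be a strictly positive ideal of Φ⁺ (an upper order ideal with ℐ ∩ Π = ∅, Π the simple roots). For γ ∈ Φ⁺ define γ_{ℐ,−} := min{ k : γ = γ₁ + ⋯ + γ_{k+1} with all γᵢ ∈ Φ⁺ \ ℐ }. Then for α, β, α+β ∈ Φ⁺, with a = α_{ℐ,−}, b = β_{ℐ,−}, c = (α+β)_{ℐ,−}, we have a + b ≤ c ≤ a + b + 1. -/

import Mathlib

open RealInnerProductSpace
open scoped Classical

variable {V : Type*} [NormedAddCommGroup V] [InnerProductSpace ℝ V] [FiniteDimensional ℝ V]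

/-- A finite crystallographic root system in the real inner product space `V`. -/
structure IsRootSystem (Φ : Set V) : Prop where
  finite : Φ.Finite
  nonzero : (0 : V) ∉ Φ
  spanning : Submodule.span ℝ Φ = ⊤
  reflect_mem : ∀ α ∈ Φ, ∀ β ∈ Φ, β - (2 * ⟪β, α⟫ / ⟪α, α⟫) • α ∈ Φ
  crystallographic : ∀ α ∈ Φ, ∀ β ∈ Φ, ∃ n : ℤ, 2 * ⟪β, α⟫ / ⟪α, α⟫ = (n : ℝ)

/-- `Pos` is a system of positive roots for `Φ`: the roots on the positive side of a
generic linear functional. -/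
def IsPositiveSystem (Φ Pos : Set V) : Prop :=
  ∃ f : V →ₗ[ℝ] ℝ, (∀ α ∈ Φ, f α ≠ 0) ∧ Pos = {α ∈ Φ | 0 < f α}

/-- Irreducibility of a root system: no splitting into two nonempty orthogonal parts. -/
def IsIrreducibleRootSystem (Φ : Set V) : Prop :=
  Φ.Nonempty ∧ ∀ Φ₁ Φ₂ : Set V, Φ = Φ₁ ∪ Φ₂ →
    (∀ α ∈ Φ₁, ∀ β ∈ Φ₂, ⟪α, β⟫ = 0) → Φ₁ = ∅ ∨ Φ₂ = ∅

/-- A simple root: a positive root that is not the sum of two positive roots. -/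
def IsSimpleRoot (Pos : Set V) (α : V) : Prop :=
  α ∈ Pos ∧ ∀ β ∈ Pos, ∀ γ ∈ Pos, α ≠ β + γ

/-- An upper order ideal of the positive roots. -/
def IsUpperIdeal (Pos I : Set V) : Prop :=
  I ⊆ Pos ∧ ∀ α ∈ I, ∀ β ∈ Pos, α + β ∈ Pos → α + β ∈ I

/-- `γ` is a sum of `k` elements of `S`. -/
def IsSumOf (S : Set V) (k : ℕ) (γ : V) : Prop :=
  ∃ f : Fin k → V, (∀ i, f i ∈ S) ∧ ∑ i, f i = γ

/-- The standard partial order on roots: `α ≼ γ` iff `γ - α` is a (possibly empty)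
sum of positive roots. -/
def RootLE (Pos : Set V) (α γ : V) : Prop := ∃ k, IsSumOf Pos k (γ - α)

/-- The set of minimal roots of an ideal `I`. -/
def minimalRoots (Pos I : Set V) : Set V :=
  {α | α ∈ I ∧ ∀ β ∈ I, RootLE Pos β α → β = α}

/-- `γ_{I,+}`: the maximal number of summands in a decomposition of `γ` as a sum of
elements of `I` (with junk value `0` if no decomposition exists). -/
noncomputable def aPlus (I : Set V) (γ : V) : ℕ := sSup {k | IsSumOf I k γ}

/-- `γ_{I,-}`: the minimal `k` such that `γ` is a sum of `k + 1` elements of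
`Pos \ I`. -/
noncomputable def aMinus (Pos I : Set V) (γ : V) : ℕ := sInf {k | IsSumOf (Pos \ I) (k + 1) γ}

/-- The height of a positive root: the number of summands when written as a sum of
simple roots. -/
noncomputable def rootHeight (Pos : Set V) (γ : V) : ℕ :=
  sSup {k | IsSumOf {α | IsSimpleRoot Pos α} k γ}


-- auxiliary lemmas


set_option linter.unusedSectionVars false

private lemma innerSelfPos {x : V} (hx : x ≠ 0) : 0 < ⟪x, x⟫ :=
  lt_of_le_of_ne real_inner_self_nonneg (Ne.symm fun h => hx (inner_self_eq_zero.mp h))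

private lemma listInner (l : List V) (y : V) :
    ⟪l.sum, y⟫ = (l.map (fun x => ⟪x, y⟫)).sum := by
  induction l with
  | nil => simp
  | cons a t ih => simp [inner_add_left, ih]

private lemma sumPosList (l : List ℝ) (h : 0 < l.sum) : ∃ x ∈ l, 0 < x := by
  induction l with
  | nil => simp at h
  | cons a t ih =>
    rw [List.sum_cons] at h
    by_cases ha : 0 < a
    · exact ⟨a, by simp, ha⟩
    · obtain ⟨x, hx, hx0⟩ := ih (by linarith [not_lt.mp ha])
      exact ⟨x, by simp [hx], hx0⟩

private lemma eraseSum (l : List V) (a : V) (h : a ∈ l) : (l.erase a).sum = l.sum - a := by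
  have h2 := (List.perm_cons_erase h).sum_eq
  rw [List.sum_cons] at h2
  rw [h2]; abel

private lemma negMem {Φ : Set V} (hΦ : IsRootSystem Φ) {a : V} (ha : a ∈ Φ) : -a ∈ Φ := by
  have h0 : a ≠ 0 := fun h => hΦ.nonzero (h ▸ ha)
  have h1 : ⟪a, a⟫ ≠ 0 := (innerSelfPos h0).ne'
  have h2 := hΦ.reflect_mem a ha a ha
  have h3 : 2 * ⟪a, a⟫ / ⟪a, a⟫ = 2 := by field_simp
  rw [h3] at h2
  convert h2 using 1
  rw [two_smul]; abel

private lemma diffMem {Φ : Set V} (hΦ : IsRootSystem Φ) {a t : V} (ha : a ∈ Φ) (ht : t ∈ Φ)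
    (hpos : 0 < ⟪a, t⟫) : a = t ∨ a - t ∈ Φ := by
  have ha0 : a ≠ 0 := fun h => hΦ.nonzero (h ▸ ha)
  have ht0 : t ≠ 0 := fun h => hΦ.nonzero (h ▸ ht)
  have haa : 0 < ⟪a, a⟫ := innerSelfPos ha0
  have htt : 0 < ⟪t, t⟫ := innerSelfPos ht0
  obtain ⟨n, hn⟩ := hΦ.crystallographic t ht a ha
  obtain ⟨m, hm⟩ := hΦ.crystallographic a ha t ht
  have hta : ⟪t, a⟫ = ⟪a, t⟫ := real_inner_comm a t
  have hn0 : (0:ℝ) < (n:ℝ) := by rw [← hn]; positivity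
  have hm0 : (0:ℝ) < (m:ℝ) := by rw [← hm, hta]; positivity
  have hn1 : 1 ≤ n := by exact_mod_cast hn0
  have hm1 : 1 ≤ m := by exact_mod_cast hm0
  rcases eq_or_lt_of_le hn1 with h1 | h2
  · -- n = 1 : a - t ∈ Φ by reflection
    right
    have h2 := hΦ.reflect_mem t ht a ha
    rw [hn, ← h1] at h2
    simpa using h2
  rcases eq_or_lt_of_le hm1 with g1 | g2
  · -- m = 1 : t - a ∈ Φ
    right
    have h2 := hΦ.reflect_mem a ha t ht
    rw [hm, ← g1] at h2
    simp only [Int.cast_one, one_smul] at h2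
    have := negMem hΦ h2
    simpa using this
  · -- n ≥ 2 and m ≥ 2 : forces a = t
    left
    have hn2 : (2:ℝ) ≤ (n:ℝ) := by exact_mod_cast h2
    have hm2 : (2:ℝ) ≤ (m:ℝ) := by exact_mod_cast g2
    have e1 : 2 * ⟪a, t⟫ = (n:ℝ) * ⟪t, t⟫ := by
      field_simp at hn; linarith [hn]
    have e2 : 2 * ⟪a, t⟫ = (m:ℝ) * ⟪a, a⟫ := by
      rw [← hta]; field_simp at hm; linarith [hm]
    have i1 : ⟪t, t⟫ ≤ ⟪a, t⟫ := by nlinarith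
    have i2 : ⟪a, a⟫ ≤ ⟪a, t⟫ := by nlinarith
    have hd : ⟪a - t, a - t⟫ ≤ 0 := by
      have : ⟪a - t, a - t⟫ = ⟪a, a⟫ - ⟪a, t⟫ - ⟪t, a⟫ + ⟪t, t⟫ := by
        simp only [inner_sub_left, inner_sub_right]; ring
      rw [this, hta]; linarith
    have hz : a - t = 0 := by
      have := le_antisymm hd real_inner_self_nonneg
      exact inner_self_eq_zero.mp this
    exact sub_eq_zero.mp hz

section PosSystem

variable {Φ Pos I : Set V} (hΦ : IsRootSystem Φ) (f : V →ₗ[ℝ] ℝ)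
  (hf : ∀ a ∈ Φ, f a ≠ 0) (hP : Pos = {a ∈ Φ | 0 < f a})

include hΦ hf hP

private lemma memPosIff {a : V} : a ∈ Pos ↔ a ∈ Φ ∧ 0 < f a := by
  rw [hP]; exact Set.mem_sep_iff

private lemma sumNonneg (l : List V) (hl : ∀ x ∈ l, x ∈ Pos) : 0 ≤ f l.sum := by
  rw [map_list_sum]
  apply List.sum_nonneg
  intro x hx
  obtain ⟨y, hy, rfl⟩ := List.mem_map.mp hx
  exact le_of_lt (((memPosIff hΦ f hf hP).mp (hl y hy)).2)

private lemma ideal_closed (hI : IsUpperIdeal Pos I) :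
    ∀ n (l : List V), l.length = n → (∀ x ∈ l, x ∈ Pos) → ∀ δ, δ ∈ Pos → δ ∈ I →
      δ + l.sum ∈ Pos → δ + l.sum ∈ I := by
  intro n
  induction n using Nat.strong_induction_on with
  | _ n ih =>
  intro l hlen hl δ hδP hδI hsum
  rcases eq_or_ne l [] with rfl | hlne
  · simpa using hδI
  set γ := δ + l.sum with hγ
  have hδ := (memPosIff hΦ f hf hP).mp hδP
  have hγ' := (memPosIff hΦ f hf hP).mp hsum
  have hd0 : γ - δ ≠ 0 := by
    intro h
    have : l.sum = 0 := by rw [hγ] at h; simpa using h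
    have hfl : 0 < f l.sum := by
      rw [map_list_sum]
      apply List.sum_pos
      · intro x hx
        obtain ⟨y, hy, rfl⟩ := List.mem_map.mp hx
        exact ((memPosIff hΦ f hf hP).mp (hl y hy)).2
      · simpa using hlne
    rw [this] at hfl; simp at hfl
  have hip : 0 < ⟪l.sum, γ - δ⟫ := by
    have : l.sum = γ - δ := by rw [hγ]; abel
    rw [this]
    exact innerSelfPos hd0
  rw [listInner] at hip
  obtain ⟨z, hz, hz0⟩ := sumPosList _ hip
  obtain ⟨ρ, hρl, rfl⟩ := List.mem_map.mp hz
  have hρ := (memPosIff hΦ f hf hP).mp (hl ρ hρl)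
  have hρsplit : ⟪ρ, γ⟫ - ⟪ρ, δ⟫ > 0 := by
    rw [← inner_sub_right]; exact hz0
  have herl : (l.erase ρ).length = n - 1 := by
    rw [List.length_erase_of_mem hρl, hlen]
  have herlt : n - 1 < n := by
    have : 0 < l.length := List.length_pos_iff.mpr hlne
    omega
  have hersum : (l.erase ρ).sum = l.sum - ρ := eraseSum l ρ hρl
  have herPos : ∀ x ∈ l.erase ρ, x ∈ Pos := fun x hx => hl x (List.mem_of_mem_erase hx)
  by_cases hc : 0 < ⟪ρ, γ⟫
  · -- γ - ρ ∈ Φ, recurse with δ and l.erase ρ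
    have := diffMem hΦ hγ'.1 hρ.1 (by rwa [real_inner_comm])
    rcases this with heq | hmem
    · exfalso
      have h1 : (l.erase ρ).sum = -δ := by rw [hersum, ← heq, hγ]; abel
      have h2 : 0 ≤ f (l.erase ρ).sum := sumNonneg hΦ f hf hP _ herPos
      rw [h1] at h2; simp at h2; linarith [hδ.2]
    · have hγρeq : γ - ρ = δ + (l.erase ρ).sum := by rw [hersum, hγ]; abel
      have hγρPos : γ - ρ ∈ Pos := by
        rw [memPosIff hΦ f hf hP]
        refine ⟨hmem, ?_⟩
        rw [hγρeq, map_add]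
        have := sumNonneg hΦ f hf hP _ herPos
        linarith [hδ.2]
      have hIH := ih (n-1) herlt (l.erase ρ) herl herPos δ hδP hδI (hγρeq ▸ hγρPos)
      rw [← hγρeq] at hIH
      have := hI.2 (γ - ρ) hIH ρ (hl ρ hρl) (by rw [sub_add_cancel]; exact hsum)
      rwa [sub_add_cancel] at this
  · -- ⟪ρ, δ⟫ < 0, so δ + ρ ∈ Φ; recurse with δ + ρ
    have hρδ : 0 < ⟪-δ, ρ⟫ := by
      rw [inner_neg_left, real_inner_comm]; push_neg at hc
      have : ⟪ρ, δ⟫ < 0 := by linarith [hρsplit, hc]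
      linarith
    have := diffMem hΦ (negMem hΦ hδ.1) hρ.1 hρδ
    rcases this with heq | hmem
    · exfalso
      have : f (-δ) = f ρ := by rw [heq]
      simp at this; linarith [hδ.2, hρ.2]
    · have hδρΦ : δ + ρ ∈ Φ := by
        have h5 := negMem hΦ hmem
        rw [neg_sub, sub_neg_eq_add, add_comm] at h5
        exact h5
      have hδρPos : δ + ρ ∈ Pos := by
        rw [memPosIff hΦ f hf hP]
        refine ⟨hδρΦ, ?_⟩
        rw [map_add]; linarith [hδ.2, hρ.2]
      have hδρI : δ + ρ ∈ I := hI.2 δ hδI ρ (hl ρ hρl) hδρPos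
      have hre : (δ + ρ) + (l.erase ρ).sum = γ := by rw [hersum, hγ]; abel
      have hIH := ih (n-1) herlt (l.erase ρ) herl herPos (δ + ρ) hδρPos hδρI
        (by rw [hre]; exact hsum)
      rwa [hre] at hIH

private lemma not_in_ideal (hI : IsUpperIdeal Pos I) (l : List V) (hl : ∀ x ∈ l, x ∈ Pos)
    {δ ρ : V} (hδ : δ ∈ Pos) (hρP : ρ ∈ Pos) (hρ : ρ ∉ I) (h : ρ = δ + l.sum) : δ ∉ I :=
  fun hδI => hρ (h ▸ ideal_closed hΦ f hf hP hI l.length l rfl hl δ hδ hδI (h ▸ hρP))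

private lemma sum_of_simples :
    ∀ n, ∀ γ ∈ Pos, ({x ∈ Pos | f x < f γ}).ncard ≤ n →
      ∃ l : List V, l ≠ [] ∧ (∀ x ∈ l, IsSimpleRoot Pos x) ∧ l.sum = γ := by
  have hfin : Pos.Finite := by
    rw [hP]; exact hΦ.finite.subset (Set.sep_subset _ _)
  intro n
  induction n using Nat.strong_induction_on with
  | _ n ih =>
  intro γ hγ hcard
  by_cases hs : IsSimpleRoot Pos γ
  · exact ⟨[γ], by simp, by simpa using hs, by simp⟩
  · rw [IsSimpleRoot, not_and_or] at hs
    rcases hs with h | h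
    · exact absurd hγ h
    push_neg at h
    obtain ⟨b, hb, c, hc, hbc⟩ := h
    have hfb := ((memPosIff hΦ f hf hP).mp hb).2
    have hfc := ((memPosIff hΦ f hf hP).mp hc).2
    have hfγ : f γ = f b + f c := by rw [hbc, map_add]
    have hbmem : b ∈ {x ∈ Pos | f x < f γ} := ⟨hb, by linarith⟩
    have hcmem : c ∈ {x ∈ Pos | f x < f γ} := ⟨hc, by linarith⟩
    have hfinγ : ({x ∈ Pos | f x < f γ}).Finite := hfin.subset (Set.sep_subset _ _)
    have hsub : ∀ d : V, d ∈ Pos → f d < f γ → d ∈ {x ∈ Pos | f x < f γ} → True := fun _ _ _ _ => trivial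
    have key : ∀ d : V, d ∈ Pos → (0 < f d) → f d < f γ →
        ({x ∈ Pos | f x < f d}).ncard < ({x ∈ Pos | f x < f γ}).ncard := by
      intro d hd hd0 hdγ
      apply Set.ncard_lt_ncard _ hfinγ
      constructor
      · rintro x ⟨hx1, hx2⟩; exact ⟨hx1, by linarith⟩
      · intro hcon
        have := hcon ⟨hd, hdγ⟩
        exact absurd this.2 (lt_irrefl _)
    have hb' := key b hb hfb (by linarith)
    have hc' := key c hc hfc (by linarith)
    have hpos : 0 < ({x ∈ Pos | f x < f γ}).ncard := Nat.pos_of_ne_zero (by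
      intro h0
      rw [Set.ncard_eq_zero hfinγ] at h0
      exact absurd (h0 ▸ hbmem) (Set.notMem_empty b))
    obtain ⟨lb, hlb0, hlbS, hlbs⟩ := ih (n-1) (by omega) b hb (by omega)
    obtain ⟨lc, hlc0, hlcS, hlcs⟩ := ih (n-1) (by omega) c hc (by omega)
    refine ⟨lb ++ lc, by simp [hlb0], ?_, by rw [List.sum_append, hlbs, hlcs, hbc]⟩
    intro x hx
    rcases List.mem_append.mp hx with h | h
    · exact hlbS x h
    · exact hlcS x h

private lemma split_lemma (hI : IsUpperIdeal Pos I) :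
    ∀ n (l : List V), l.length = n → (∀ x ∈ l, x ∈ Pos ∧ x ∉ I) →
      ∀ a b : V, a ∈ Pos → b ∈ Pos → a + b ∈ Pos → l.sum = a + b →
      ∃ la lb : List V, (∀ x ∈ la, x ∈ Pos ∧ x ∉ I) ∧ (∀ x ∈ lb, x ∈ Pos ∧ x ∉ I) ∧
        la.sum = a ∧ lb.sum = b ∧ la ≠ [] ∧ lb ≠ [] ∧ la.length + lb.length ≤ n + 1 := by
  intro n
  induction n using Nat.strong_induction_on with
  | _ n ih =>
  intro l hlen hl a b ha hb hab hsum
  have habΦ := (memPosIff hΦ f hf hP).mp hab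
  have hγ0 : (a + b) ≠ 0 := fun h => hΦ.nonzero (h ▸ habΦ.1)
  have hip : 0 < ⟪l.sum, a + b⟫ := by rw [hsum]; exact innerSelfPos hγ0
  rw [listInner] at hip
  obtain ⟨z, hz, hz0⟩ := sumPosList _ hip
  obtain ⟨ρ, hρl, rfl⟩ := List.mem_map.mp hz
  have key : ∀ a b : V, a ∈ Pos → b ∈ Pos → a + b ∈ Pos → l.sum = a + b →
      0 < ⟪ρ, a + b⟫ → 0 < ⟪ρ, a⟫ →
      ∃ la lb : List V, (∀ x ∈ la, x ∈ Pos ∧ x ∉ I) ∧ (∀ x ∈ lb, x ∈ Pos ∧ x ∉ I) ∧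
        la.sum = a ∧ lb.sum = b ∧ la ≠ [] ∧ lb ≠ [] ∧ la.length + lb.length ≤ n + 1 := by
    clear hip hz hz0 hsum ha hb hab habΦ hγ0 a b
    intro a b ha hb hab hsum hργ hρa
    have hρ := hl ρ hρl
    have hρP := (memPosIff hΦ f hf hP).mp hρ.1
    have haP := (memPosIff hΦ f hf hP).mp ha
    have hbP := (memPosIff hΦ f hf hP).mp hb
    have habP := (memPosIff hΦ f hf hP).mp hab
    have hersum : (l.erase ρ).sum = l.sum - ρ := eraseSum l ρ hρl
    have herparts : ∀ x ∈ l.erase ρ, x ∈ Pos ∧ x ∉ I :=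
      fun x hx => hl x (List.mem_of_mem_erase hx)
    have herPos : ∀ x ∈ l.erase ρ, x ∈ Pos := fun x hx => (herparts x hx).1
    have hn1 : 1 ≤ n := by
      rw [← hlen]; exact List.length_pos_iff.mpr (List.ne_nil_of_mem hρl)
    have herlen : (l.erase ρ).length = n - 1 := by
      rw [List.length_erase_of_mem hρl, hlen]
    rcases diffMem hΦ habP.1 hρP.1 (by rwa [real_inner_comm]) with hγρ | hγρ
    · -- a + b = ρ : answer ⟨[a], [b]⟩
      have haI : a ∉ I := not_in_ideal hΦ f hf hP hI [b] (by simpa using hb) ha hρ.1 hρ.2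
        (by rw [← hγρ]; simp)
      have hbI : b ∉ I := not_in_ideal hΦ f hf hP hI [a] (by simpa using ha) hb hρ.1 hρ.2
        (by rw [← hγρ]; simp; abel)
      exact ⟨[a], [b], by simpa using ⟨ha, haI⟩, by simpa using ⟨hb, hbI⟩,
        by simp, by simp, by simp, by simp, by simp; omega⟩
    · have hγρsum : (l.erase ρ).sum = a + b - ρ := by rw [hersum, hsum]
      have hfγρ : 0 < f (a + b - ρ) := by
        have h1 : 0 ≤ f (l.erase ρ).sum := sumNonneg hΦ f hf hP _ herPos
        rw [hγρsum] at h1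
        exact lt_of_le_of_ne h1 (Ne.symm (hf _ hγρ))
      have hγρPos : a + b - ρ ∈ Pos := (memPosIff hΦ f hf hP).mpr ⟨hγρ, hfγρ⟩
      rcases diffMem hΦ haP.1 hρP.1 (by rwa [real_inner_comm]) with haρ | haρ
      · -- a = ρ : ⟨[a], l.erase ρ⟩
        have hlbne : l.erase ρ ≠ [] := by
          intro hemp
          rw [hemp] at hγρsum
          have hb0 : b = 0 := by
            have h2 : a + b - ρ = b := by rw [← haρ]; abel
            rw [h2] at hγρsum; simpa using hγρsum.symm
          rw [hb0] at hbP; simpa using hbP.2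
        refine ⟨[a], l.erase ρ, by simpa using ⟨ha, haρ ▸ hρ.2⟩, herparts,
          by simp, ?_, by simp, hlbne, ?_⟩
        · rw [hγρsum, ← haρ]; abel
        · simp only [List.length_cons, List.length_nil, herlen]; omega
      · have hfaρ := hf _ haρ
        rcases hfaρ.lt_or_gt with hneg | hpos
        · -- f (a - ρ) < 0 : η := ρ - a works
          have hηΦ : ρ - a ∈ Φ := by
            have := negMem hΦ haρ; rwa [neg_sub] at this
          have hηf : 0 < f (ρ - a) := by
            have : f (a - ρ) < 0 := hneg
            rw [map_sub] at this ⊢; linarith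
          have hηPos : ρ - a ∈ Pos := (memPosIff hΦ f hf hP).mpr ⟨hηΦ, hηf⟩
          have hηI : ρ - a ∉ I := not_in_ideal hΦ f hf hP hI [a] (by simpa using ha)
            hηPos hρ.1 hρ.2 (by simp)
          have haI : a ∉ I := not_in_ideal hΦ f hf hP hI [ρ - a] (by simpa using hηPos)
            ha hρ.1 hρ.2 (by simp)
          refine ⟨[a], (ρ - a) :: l.erase ρ, by simpa using ⟨ha, haI⟩, ?_,
            by simp, ?_, by simp, by simp, ?_⟩
          · intro x hx
            rcases List.mem_cons.mp hx with rfl | hx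
            · exact ⟨hηPos, hηI⟩
            · exact herparts x hx
          · rw [List.sum_cons, hγρsum]; abel
          · simp only [List.length_cons, List.length_nil, herlen]; omega
        · -- 0 < f (a - ρ) : recurse
          have ha' : a - ρ ∈ Pos := (memPosIff hΦ f hf hP).mpr ⟨haρ, hpos⟩
          have hsum' : (l.erase ρ).sum = (a - ρ) + b := by rw [hγρsum]; abel
          have hab' : (a - ρ) + b ∈ Pos := by
            rwa [show (a - ρ) + b = a + b - ρ by abel]
          obtain ⟨la', lb', g1, g2, g3, g4, g5, g6, g7⟩ :=
            ih (n-1) (by omega) (l.erase ρ) herlen herparts (a - ρ) b ha' hb hab' hsum'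
          refine ⟨ρ :: la', lb', ?_, g2, ?_, g4, by simp, g6, ?_⟩
          · intro x hx
            rcases List.mem_cons.mp hx with rfl | hx
            · exact hρ
            · exact g1 x hx
          · rw [List.sum_cons, g3]; abel
          · simp only [List.length_cons]; omega
  rcases lt_or_ge 0 ⟪ρ, a⟫ with hρa | hρa'
  · exact key a b ha hb hab hsum hz0 hρa
  · have hρb : 0 < ⟪ρ, b⟫ := by
      rw [inner_add_right] at hz0; linarith
    obtain ⟨la, lb, h1, h2, h3, h4, h5, h6, h7⟩ :=
      key b a hb ha (by rwa [add_comm]) (by rw [hsum, add_comm]) (by rwa [add_comm]) hρb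
    exact ⟨lb, la, h2, h1, h4, h3, h6, h5, by omega⟩

end PosSystem

private lemma isSumOf_iff (S : Set V) (k : ℕ) (g : V) :
    IsSumOf S k g ↔ ∃ l : List V, l.length = k ∧ (∀ x ∈ l, x ∈ S) ∧ l.sum = g := by
  constructor
  · rintro ⟨F, hF, hsum⟩
    refine ⟨List.ofFn F, by simp, ?_, by rw [List.sum_ofFn]; exact hsum⟩
    intro x hx
    obtain ⟨i, rfl⟩ := List.mem_ofFn.mp hx
    exact hF i
  · rintro ⟨l, rfl, hlS, rfl⟩
    refine ⟨l.get, fun i => hlS _ (l.get_mem _), ?_⟩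
    conv_rhs => rw [← List.ofFn_get l]
    rw [List.sum_ofFn]


/-- For a strictly positive upper order ideal `I` of `Φ⁺` and `α, β, α + β ∈ Φ⁺`, the
quantities `a = α_{I,-}`, `b = β_{I,-}`, `c = (α+β)_{I,-}` satisfy
`a + b ≤ c ≤ a + b + 1`. -/
theorem aMinus_add_le (Φ Pos I : Set V) (hΦ : IsRootSystem Φ)
    (hirr : IsIrreducibleRootSystem Φ) (hPos : IsPositiveSystem Φ Pos)
    (hI : IsUpperIdeal Pos I) (hsp : ∀ α, IsSimpleRoot Pos α → α ∉ I)
    (α β : V) (hα : α ∈ Pos) (hβ : β ∈ Pos) (hαβ : α + β ∈ Pos) :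
    aMinus Pos I α + aMinus Pos I β ≤ aMinus Pos I (α + β) ∧
      aMinus Pos I (α + β) ≤ aMinus Pos I α + aMinus Pos I β + 1 := by
  obtain ⟨f, hf, hP⟩ := hPos
  have hNE : ∀ γ ∈ Pos, {k | IsSumOf (Pos \ I) (k + 1) γ}.Nonempty := by
    intro γ hγ
    obtain ⟨l, hl0, hlS, hls⟩ :=
      sum_of_simples hΦ f hf hP ({x ∈ Pos | f x < f γ}).ncard γ hγ le_rfl
    have hlen : 1 ≤ l.length := List.length_pos_iff.mpr hl0
    refine ⟨l.length - 1, (isSumOf_iff _ _ _).mpr ⟨l, by omega, ?_, hls⟩⟩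
    intro x hx
    exact ⟨(hlS x hx).1, hsp x (hlS x hx)⟩
  constructor
  · have hc := Nat.sInf_mem (hNE (α + β) hαβ)
    obtain ⟨l, hlen, hlS, hls⟩ := (isSumOf_iff _ _ _).mp hc
    have hl' : ∀ x ∈ l, x ∈ Pos ∧ x ∉ I := fun x hx => ⟨(hlS x hx).1, (hlS x hx).2⟩
    obtain ⟨la, lb, h1, h2, h3, h4, h5, h6, h7⟩ :=
      split_lemma hΦ f hf hP hI l.length l rfl hl' α β hα hβ hαβ hls
    have hpa : 1 ≤ la.length := List.length_pos_iff.mpr h5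
    have hpb : 1 ≤ lb.length := List.length_pos_iff.mpr h6
    have hA : aMinus Pos I α ≤ la.length - 1 :=
      Nat.sInf_le ((isSumOf_iff _ _ _).mpr ⟨la, by omega,
        fun x hx => ⟨(h1 x hx).1, (h1 x hx).2⟩, h3⟩)
    have hB : aMinus Pos I β ≤ lb.length - 1 :=
      Nat.sInf_le ((isSumOf_iff _ _ _).mpr ⟨lb, by omega,
        fun x hx => ⟨(h2 x hx).1, (h2 x hx).2⟩, h4⟩)
    have hlen' : l.length = aMinus Pos I (α + β) + 1 := hlen
    omega
  · obtain ⟨la, hla, hlaS, hlas⟩ := (isSumOf_iff _ _ _).mp (Nat.sInf_mem (hNE α hα))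
    obtain ⟨lb, hlb, hlbS, hlbs⟩ := (isSumOf_iff _ _ _).mp (Nat.sInf_mem (hNE β hβ))
    apply Nat.sInf_le
    refine (isSumOf_iff _ _ _).mpr ⟨la ++ lb, ?_, ?_, by rw [List.sum_append, hlas, hlbs]⟩
    · rw [List.length_append, hla, hlb, aMinus, aMinus]; omega
    · intro x hx
      rcases List.mem_append.mp hx with h | h
      · exact hlaS x h
      · exact hlbS x h
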